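/- Let α > 0 and λ > 0, and let the law of U be the Gamma mixture (Gamma(λ, rate 1/2)).bind (fun v => Gamma(α, rate 1/(2v))). Then for every natural number m, the m-th moment of U is finite and equals E[U^m] = 2^{2m} Γ(m+α) Γ(λ+m) / ( Γ(α) Γ(λ) ). -/

import Mathlib

open MeasureTheory ProbabilityTheory

open Real Set

lemma measurable_gammaPDF (a r : ℝ) : Measurable (gammaPDF a r) :=
  (measurable_gammaPDFReal a r).ennreal_ofReal

lemma gamma_lintegral_pow {a r : ℝ} (ha : 0 < a) (hr : 0 < r) (n : ℕ) :
    ∫⁻ x, ENNReal.ofReal (|x| ^ n) ∂(gammaMeasure a r) =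
      ENNReal.ofReal (Real.Gamma (a + n) / Real.Gamma a / r ^ n) := by
  rw [gammaMeasure, lintegral_withDensity_eq_lintegral_mul _
    (measurable_gammaPDF a r) (by measurability)]
  have h0 : ∫⁻ x in Set.Iio 0, (gammaPDF a r * fun x => ENNReal.ofReal (|x| ^ n)) x = 0 := by
    rw [setLIntegral_congr_fun (g := fun _ ↦ 0) measurableSet_Iio
      (fun x (hx : x < 0) ↦ by simp [gammaPDF_of_neg hx]), lintegral_zero]
  have hsplit : (∫⁻ x, (gammaPDF a r * fun x => ENNReal.ofReal (|x| ^ n)) x) =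
      ∫⁻ x in Set.Ioi 0, (gammaPDF a r * fun x => ENNReal.ofReal (|x| ^ n)) x := by
    rw [← lintegral_add_compl _ measurableSet_Iio (μ := volume), h0, zero_add, compl_Iio,
      ← Set.Ioi_union_left, lintegral_union (by measurability) (by simp)]
    have : (volume.restrict ({0} : Set ℝ)) = 0 := by
      simp [Measure.restrict_eq_zero]
    simp [this]
  rw [hsplit]
  have key : ∀ x ∈ Set.Ioi (0:ℝ), (gammaPDF a r * fun x => ENNReal.ofReal (|x| ^ n)) x =
      ENNReal.ofReal ((r ^ a / Real.Gamma a) * (x ^ (a + n - 1) * Real.exp (-(r * x)))) := by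
    intro x hx
    have hx' : (0:ℝ) < x := hx
    rw [Pi.mul_apply, gammaPDF_of_nonneg hx'.le, ← ENNReal.ofReal_mul (by positivity)]
    congr 1
    rw [abs_of_pos hx', ← Real.rpow_natCast x n,
      show a + (n:ℝ) - 1 = (a - 1) + n by ring, Real.rpow_add hx']
    ring
  rw [setLIntegral_congr_fun measurableSet_Ioi key]
  rw [← ofReal_integral_eq_lintegral_ofReal]
  · rw [integral_const_mul, integral_rpow_mul_exp_neg_mul_Ioi (by positivity) hr]
    congr 1
    rw [Real.rpow_add (by positivity : (0:ℝ) < 1/r), Real.div_rpow (by norm_num) hr.le,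
      Real.one_rpow, Real.rpow_natCast]
    field_simp
    ring_nf
    rw [← mul_pow, mul_inv_cancel₀ hr.ne', one_pow]
  · exact (Integrable.const_mul (by
      have := integrableOn_rpow_mul_exp_neg_mul_rpow
        (s := a + n - 1) (p := 1) (b := r) (by linarith) one_pos hr
      refine this.congr_fun (fun x hx => ?_) measurableSet_Ioi
      simp only [Real.rpow_one, neg_mul]) _)
  · exact (ae_restrict_iff' measurableSet_Ioi).mpr (ae_of_all _ fun x hx => by have hx0 : (0:ℝ) < x := hx; positivity)

lemma measurable_gamma_kernel (α : ℝ) :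
    Measurable (fun v : ℝ => gammaMeasure α (1 / (2 * v))) := by
  apply Measure.measurable_of_measurable_coe
  intro s hs
  simp_rw [gammaMeasure, withDensity_apply _ hs]
  apply Measurable.lintegral_prod_right' (f := fun p : ℝ × ℝ => gammaPDF α (1 / (2 * p.1)) p.2)
  unfold gammaPDF gammaPDFReal
  apply Measurable.ennreal_ofReal
  apply Measurable.ite (measurableSet_le measurable_const measurable_snd) _ measurable_const
  apply Measurable.mul
  · apply Measurable.mul
    · exact Measurable.div_const (by measurability) _
    · measurability
  · exact ((measurable_const.div (measurable_fst.const_mul 2)).mul measurable_snd).neg.exp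

lemma gammaMeasure_Iio_zero' (a r : ℝ) : gammaMeasure a r (Set.Iio 0) = 0 := by
  rw [gammaMeasure, withDensity_apply _ measurableSet_Iio,
    setLIntegral_congr_fun (g := fun _ ↦ 0) measurableSet_Iio
      (fun x (hx : x < 0) ↦ gammaPDF_of_neg hx), lintegral_zero]

lemma gammaMeasure_Iic_zero (a r : ℝ) : gammaMeasure a r (Set.Iic 0) = 0 := by
  have h : (Set.Iic (0:ℝ)) = Set.Iio 0 ∪ {0} := by
    ext x; simp [le_iff_lt_or_eq]
  rw [h]
  refine le_antisymm (le_trans (measure_union_le _ _) ?_) zero_le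
  rw [gammaMeasure_Iio_zero']
  have : gammaMeasure a r ({0} : Set ℝ) = 0 := by
    rw [gammaMeasure, withDensity_apply _ (measurableSet_singleton 0)]
    rw [Measure.restrict_eq_zero.mpr (by simp), lintegral_zero_measure]
  simp [this]

/-- For the Gamma mixture `V ~ Gamma(λ, scale 2)`, `U | V = v ~ Gamma(α, scale 2v)`,
the `m`-th moment of `U` is finite and equals `2^(2m) Γ(m+α) Γ(λ+m) / (Γ(α) Γ(λ))`. -/
theorem gamma_mixture_moments
    (α lam : ℝ) (hα : 0 < α) (hlam : 0 < lam) (m : ℕ) :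
    Integrable (fun u : ℝ => u ^ m)
        ((gammaMeasure lam (1 / 2)).bind (fun v => gammaMeasure α (1 / (2 * v)))) ∧
      ∫ u, u ^ m ∂((gammaMeasure lam (1 / 2)).bind (fun v => gammaMeasure α (1 / (2 * v)))) =
        2 ^ (2 * m) * Real.Gamma (m + α) * Real.Gamma (lam + m) /
          (Real.Gamma α * Real.Gamma lam) := by
  set μ := (gammaMeasure lam (1 / 2)).bind (fun v => gammaMeasure α (1 / (2 * v))) with hμ
  set C : ℝ := 2 ^ (2 * m) * Real.Gamma (m + α) * Real.Gamma (lam + m) /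
      (Real.Gamma α * Real.Gamma lam) with hC
  have hΓα := Real.Gamma_pos_of_pos hα
  have hΓlam := Real.Gamma_pos_of_pos hlam
  have hΓαm := Real.Gamma_pos_of_pos (by positivity : (0:ℝ) < α + m)
  have hΓlamm := Real.Gamma_pos_of_pos (by positivity : (0:ℝ) < lam + m)
  have hker := measurable_gamma_kernel α
  have hfm : Measurable (fun u : ℝ => ENNReal.ofReal (|u| ^ m)) := by measurability
  -- a.e. positivity of v under the outer gamma measure
  have hvpos : ∀ᵐ v ∂(gammaMeasure lam (1/2)), 0 < v := by
    rw [ae_iff]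
    refine measure_mono_null (fun v hv => ?_) (gammaMeasure_Iic_zero lam (1/2))
    simpa using not_lt.mp hv
  -- key lintegral computation
  have hL : ∫⁻ u, ENNReal.ofReal (|u| ^ m) ∂μ = ENNReal.ofReal C := by
    rw [hμ, Measure.lintegral_bind hker.aemeasurable hfm.aemeasurable]
    have hinner : ∀ᵐ v ∂(gammaMeasure lam (1/2)),
        ∫⁻ u, ENNReal.ofReal (|u| ^ m) ∂(gammaMeasure α (1 / (2 * v))) =
          ENNReal.ofReal (Real.Gamma (α + m) / Real.Gamma α * 2 ^ m) *
            ENNReal.ofReal (|v| ^ m) := by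
      filter_upwards [hvpos] with v hv
      rw [gamma_lintegral_pow hα (by positivity) m,
        ← ENNReal.ofReal_mul (by positivity)]
      congr 1
      rw [abs_of_pos hv]
      rw [div_pow, one_pow, mul_pow]
      field_simp
    rw [lintegral_congr_ae hinner, lintegral_const_mul _ (by measurability),
      gamma_lintegral_pow hlam (by norm_num) m,
      ← ENNReal.ofReal_mul (by positivity)]
    congr 1
    rw [hC, div_pow, one_pow]
    field_simp
    ring
  have hmeas : AEStronglyMeasurable (fun u : ℝ => u ^ m) μ :=
    (measurable_id.pow_const m).aestronglyMeasurable
  have hint : Integrable (fun u : ℝ => u ^ m) μ := by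
    refine ⟨hmeas, ?_⟩
    rw [hasFiniteIntegral_iff_norm]
    have : ∀ u : ℝ, ENNReal.ofReal ‖u ^ m‖ = ENNReal.ofReal (|u| ^ m) := by
      intro u; rw [Real.norm_eq_abs, abs_pow]
    simp_rw [this, hL]
    exact ENNReal.ofReal_lt_top
  refine ⟨hint, ?_⟩
  -- a.e. nonnegativity of u under μ
  have hupos : ∀ᵐ u ∂μ, 0 ≤ u := by
    rw [ae_iff]
    have : {u : ℝ | ¬ 0 ≤ u} = Set.Iio 0 := by ext u; simp
    rw [this, hμ, Measure.bind_apply measurableSet_Iio hker.aemeasurable]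
    simp [gammaMeasure_Iio_zero']
  have h1 : ∫ u, u ^ m ∂μ = ∫ u, |u| ^ m ∂μ := by
    refine integral_congr_ae ?_
    filter_upwards [hupos] with u hu
    rw [abs_of_nonneg hu]
  rw [h1, integral_eq_lintegral_of_nonneg_ae (ae_of_all _ fun u => by positivity)
    ((measurable_id'.abs.pow_const m).aestronglyMeasurable), hL,
    ENNReal.toReal_ofReal (by rw [hC]; positivity)]
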